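/- With the same setup, if A_n ≤ dλ_n(1-α_n), B_n ≤ d(1-α_n)(3λ_n+1), C_n ≤ d(1-α_n)(3λ_n+3), D_n ≤ d(1-α_n)(λ_n+3), E_n ≤ d(1-α_n) with 0 ≤ α_n < 1 and λ_n > 0, then α_n d + R_n(θ) ≤ d for all θ ∈ [0,1]. -/
import Mathlib


/-- Upper containment condition for the rational quartic piece. -/
theorem rational_quartic_upper_bound (c d lam αn A B C D E : ℝ)
    (hlam : 0 < lam) (hα0 : 0 ≤ αn) (hα1 : αn < 1)
    (hA : A ≤ d * lam * (1 - αn))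
    (hB : B ≤ d * (1 - αn) * (3*lam + 1))
    (hC : C ≤ d * (1 - αn) * (3*lam + 3))
    (hD : D ≤ d * (1 - αn) * (lam + 3))
    (hE : E ≤ d * (1 - αn)) :
    ∀ θ ∈ Set.Icc (0:ℝ) 1,
      αn * d +
        (A * (1 - θ)^4 + B * (1 - θ)^3 * θ + C * (1 - θ)^2 * θ^2
          + D * (1 - θ) * θ^3 + E * θ^4) / (lam * (1 - θ) + θ) ≤ d := by
  intro θ hθ
  obtain ⟨h0, h1⟩ := hθ
  have h1θ : (0:ℝ) ≤ 1 - θ := by linarith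
  have hden : 0 < lam * (1 - θ) + θ := by
    rcases eq_or_lt_of_le h0 with h | h
    · nlinarith
    · nlinarith [mul_nonneg hlam.le h1θ]
  have key : (A * (1 - θ)^4 + B * (1 - θ)^3 * θ + C * (1 - θ)^2 * θ^2
      + D * (1 - θ) * θ^3 + E * θ^4) / (lam * (1 - θ) + θ) ≤ d * (1 - αn) := by
    rw [div_le_iff₀ hden]
    nlinarith [mul_le_mul_of_nonneg_right hA (by positivity : (0:ℝ) ≤ (1-θ)^4),
      mul_le_mul_of_nonneg_right hB (by positivity : (0:ℝ) ≤ (1-θ)^3 * θ),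
      mul_le_mul_of_nonneg_right hC (by positivity : (0:ℝ) ≤ (1-θ)^2 * θ^2),
      mul_le_mul_of_nonneg_right hD (by positivity : (0:ℝ) ≤ (1-θ) * θ^3),
      mul_le_mul_of_nonneg_right hE (by positivity : (0:ℝ) ≤ θ^4)]
  nlinarith [key]
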